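/- arXiv:1212.1488 — 4 statements merged into one kernel-verified Lean document; each statement's English description precedes it below -/
import Mathlib

section
/- Let $Q$ be a column-stochastic $k\times k$ matrix, $\alpha \in \mathbb{R}^k$ with all $\alpha_j > 0$, and suppose $Q_\alpha = Q\,\mathrm{diag}(\alpha)$ is primitive, with unique rest point $\hat w \in S_k$ (the Perron eigenvector). Then for every solution $w$ of Eigen's quasispecies system $\dot w_i = (Q_\alpha w)_i - w_i f(t)$, $f(t) = (\alpha, w(t))$, with initial condition $w(0) \in S_k$, there exist positive constants $K$ and $\kappa$ such that $|w_i(t) - \hat w_i| \le K e^{-\kappa t}$ for all $i$ and all $t \ge 0$; in particular $w(t) \to \hat w$ as $t \to \infty$. -/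
set_option synthInstance.maxHeartbeats 1000000
set_option maxHeartbeats 1000000

open Matrix

namespace EigenAux

variable {k : ℕ}

noncomputable def Lc (A : Matrix (Fin k) (Fin k) ℝ) : (Fin k → ℝ) →L[ℝ] (Fin k → ℝ) :=
  LinearMap.toContinuousLinearMap A.mulVecLin

@[simp] lemma Lc_apply (A : Matrix (Fin k) (Fin k) ℝ) (v : Fin k → ℝ) :
    Lc A v = A.mulVec v := rfl

noncomputable def Ee (A : Matrix (Fin k) (Fin k) ℝ) (t : ℝ) (v : Fin k → ℝ) : Fin k → ℝ :=
  NormedSpace.exp (t • Lc A) v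

lemma Lc_pow (A : Matrix (Fin k) (Fin k) ℝ) (n : ℕ) (v : Fin k → ℝ) :
    ((Lc A) ^ n) v = (A ^ n).mulVec v := by
  induction n with
  | zero => simp
  | succ n ih =>
    rw [pow_succ', pow_succ', ContinuousLinearMap.mul_apply, Lc_apply, ih, mulVec_mulVec]

lemma hasSum_Ee (A : Matrix (Fin k) (Fin k) ℝ) (t : ℝ) (v : Fin k → ℝ) :
    HasSum (fun n : ℕ => (((n.factorial : ℝ))⁻¹ * t ^ n) • (A ^ n).mulVec v) (Ee A t v) := by
  have h0 : HasSum (fun n : ℕ => ((n.factorial : ℝ))⁻¹ • (t • Lc A) ^ n)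
      (NormedSpace.exp (t • Lc A)) := by
    simp only [NormedSpace.exp_eq_tsum ℝ]
    exact (NormedSpace.expSeries_summable' (𝕂 := ℝ) (t • Lc A)).hasSum
  have h1 := (ContinuousLinearMap.apply ℝ (Fin k → ℝ) v).hasSum h0
  simp only [ContinuousLinearMap.apply_apply, ContinuousLinearMap.smul_apply, smul_pow, Lc_pow, smul_smul] at h1
  exact h1

lemma hasSum_Ee_entry (A : Matrix (Fin k) (Fin k) ℝ) (t : ℝ) (v : Fin k → ℝ) (i : Fin k) :
    HasSum (fun n : ℕ => (((n.factorial : ℝ))⁻¹ * t ^ n) * ((A ^ n).mulVec v i)) (Ee A t v i) := by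
  have h1 := (ContinuousLinearMap.proj (R := ℝ) (φ := fun _ : Fin k => ℝ) i).hasSum
    (hasSum_Ee A t v)
  simpa using h1

lemma pow_entry_nonneg {A : Matrix (Fin k) (Fin k) ℝ} (hA : ∀ i j, 0 ≤ A i j) (n : ℕ) :
    ∀ i j, 0 ≤ (A ^ n) i j := by
  induction n with
  | zero => intro i j; by_cases h : i = j <;> simp [pow_zero, Matrix.one_apply, h]
  | succ n ih =>
    intro i j
    rw [pow_succ, Matrix.mul_apply]
    exact Finset.sum_nonneg fun l _ => mul_nonneg (ih i l) (hA l j)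

lemma mulVec_nonneg {A : Matrix (Fin k) (Fin k) ℝ} (hA : ∀ i j, 0 ≤ A i j)
    {v : Fin k → ℝ} (hv : ∀ j, 0 ≤ v j) (i : Fin k) : 0 ≤ A.mulVec v i := by
  simp only [Matrix.mulVec, dotProduct]
  exact Finset.sum_nonneg fun l _ => mul_nonneg (hA i l) (hv l)

lemma Ee_term_nonneg {A : Matrix (Fin k) (Fin k) ℝ} (hA : ∀ i j, 0 ≤ A i j)
    {t : ℝ} (ht : 0 ≤ t) {v : Fin k → ℝ} (hv : ∀ j, 0 ≤ v j) (n : ℕ) (i : Fin k) :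
    0 ≤ (((n.factorial : ℝ))⁻¹ * t ^ n) * ((A ^ n).mulVec v i) :=
  mul_nonneg (mul_nonneg (inv_nonneg.2 (Nat.cast_nonneg _)) (pow_nonneg ht n))
    (mulVec_nonneg (pow_entry_nonneg hA n) hv i)

lemma Ee_nonneg {A : Matrix (Fin k) (Fin k) ℝ} (hA : ∀ i j, 0 ≤ A i j)
    {t : ℝ} (ht : 0 ≤ t) {v : Fin k → ℝ} (hv : ∀ j, 0 ≤ v j) (i : Fin k) :
    0 ≤ Ee A t v i := by
  have h := le_hasSum (hasSum_Ee_entry A t v i) 0 (fun n _ => Ee_term_nonneg hA ht hv n i)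
  exact le_trans (Ee_term_nonneg hA ht hv 0 i) h

lemma Ee_ge_term {A : Matrix (Fin k) (Fin k) ℝ} (hA : ∀ i j, 0 ≤ A i j)
    {t : ℝ} (ht : 0 ≤ t) {v : Fin k → ℝ} (hv : ∀ j, 0 ≤ v j) (n : ℕ) (i : Fin k) :
    (((n.factorial : ℝ))⁻¹ * t ^ n) * ((A ^ n).mulVec v i) ≤ Ee A t v i :=
  le_hasSum (hasSum_Ee_entry A t v i) n (fun m _ => Ee_term_nonneg hA ht hv m i)

lemma Ee_ge_self {A : Matrix (Fin k) (Fin k) ℝ} (hA : ∀ i j, 0 ≤ A i j)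
    {t : ℝ} (ht : 0 ≤ t) {v : Fin k → ℝ} (hv : ∀ j, 0 ≤ v j) (i : Fin k) :
    v i ≤ Ee A t v i := by
  have h := Ee_ge_term hA ht hv 0 i
  simpa using h

lemma pow_mulVec_eigen {A : Matrix (Fin k) (Fin k) ℝ} {what : Fin k → ℝ} {fbar : ℝ}
    (hweig : A.mulVec what = fbar • what) (n : ℕ) :
    (A ^ n).mulVec what = fbar ^ n • what := by
  induction n with
  | zero => simp
  | succ n ih =>
    rw [pow_succ, ← mulVec_mulVec, hweig, mulVec_smul, ih, smul_smul, pow_succ]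
    ring_nf

lemma Ee_eigen {A : Matrix (Fin k) (Fin k) ℝ} {what : Fin k → ℝ} {fbar : ℝ}
    (hweig : A.mulVec what = fbar • what) (t : ℝ) :
    Ee A t what = Real.exp (t * fbar) • what := by
  have h1 : HasSum (fun n : ℕ => (((n.factorial : ℝ))⁻¹ * (t * fbar) ^ n) • what)
      (Ee A t what) := by
    have := hasSum_Ee A t what
    convert this using 2 with n
    rw [pow_mulVec_eigen hweig, smul_smul, mul_pow]
    ring_nf
  have h2 : HasSum (fun n : ℕ => ((n.factorial : ℝ))⁻¹ • (t * fbar) ^ n)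
      (Real.exp (t * fbar)) := by
    rw [Real.exp_eq_exp_ℝ]
    simp only [NormedSpace.exp_eq_tsum ℝ]
    exact (NormedSpace.expSeries_summable' (𝕂 := ℝ) (t * fbar)).hasSum
  have h3 := (ContinuousLinearMap.id ℝ ℝ |>.smulRight what).hasSum h2
  have h4 : HasSum (fun n : ℕ => (((n.factorial : ℝ))⁻¹ * (t * fbar) ^ n) • what)
      (Real.exp (t * fbar) • what) := by
    convert h3 using 2 with n
    · simp [smul_eq_mul]
    · simp
  exact h1.unique h4

lemma Ee_add (A : Matrix (Fin k) (Fin k) ℝ) (s t : ℝ) (v : Fin k → ℝ) :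
    Ee A (s + t) v = Ee A s (Ee A t v) := by
  letI : NormedAlgebra ℚ ((Fin k → ℝ) →L[ℝ] (Fin k → ℝ)) := NormedAlgebra.restrictScalars ℚ ℝ _
  unfold Ee
  rw [add_smul, NormedSpace.exp_add_of_commute ((Commute.refl (Lc A)).smul_left s |>.smul_right t),
    ContinuousLinearMap.mul_apply]

lemma Ee_deriv (A : Matrix (Fin k) (Fin k) ℝ) (v : Fin k → ℝ) (t : ℝ) :
    HasDerivAt (fun u => Ee A u v) (A.mulVec (Ee A t v)) t := by
  have h := hasDerivAt_exp_smul_const' (𝕂 := ℝ) (Lc A) t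
  have h2 := h.clm_apply (hasDerivAt_const t v)
  simp only [ContinuousLinearMap.mul_apply, ContinuousLinearMap.map_zero, add_zero] at h2
  exact h2

lemma Ee_deriv_entry (A : Matrix (Fin k) (Fin k) ℝ) (v : Fin k → ℝ) (t : ℝ) (i : Fin k) :
    HasDerivAt (fun u => Ee A u v i) (A.mulVec (Ee A t v) i) t :=
  ((ContinuousLinearMap.proj (R := ℝ) (φ := fun _ : Fin k => ℝ) i).hasFDerivAt.comp_hasDerivAt t
    (Ee_deriv A v t))

lemma Ee_smul (A : Matrix (Fin k) (Fin k) ℝ) (t : ℝ) (c : ℝ) (v : Fin k → ℝ) :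
    Ee A t (c • v) = c • Ee A t v := by
  unfold Ee; exact map_smul _ c v

lemma Ee_sub (A : Matrix (Fin k) (Fin k) ℝ) (t : ℝ) (v u : Fin k → ℝ) :
    Ee A t (v - u) = Ee A t v - Ee A t u := by
  unfold Ee; exact map_sub _ v u

lemma Ee_mono {A : Matrix (Fin k) (Fin k) ℝ} (hA : ∀ i j, 0 ≤ A i j)
    {t : ℝ} (ht : 0 ≤ t) {v u : Fin k → ℝ} (hvu : ∀ j, v j ≤ u j) (i : Fin k) :
    Ee A t v i ≤ Ee A t u i := by
  have h := Ee_nonneg hA ht (v := u - v) (fun j => by simpa using hvu j) i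
  rw [Ee_sub] at h
  simpa using h


lemma exists_lipschitzOnWith (A : Matrix (Fin k) (Fin k) ℝ) (α : Fin k → ℝ) (R : ℝ) :
    ∃ K : NNReal, LipschitzOnWith K
      (fun x : Fin k → ℝ => A.mulVec x - (∑ j, α j * x j) • x) (Metric.closedBall 0 R) := by
  classical
  set ℓ : (Fin k → ℝ) →L[ℝ] ℝ :=
    ∑ j, α j • (ContinuousLinearMap.proj (R := ℝ) (φ := fun _ : Fin k => ℝ) j) with hℓ
  have hℓa : ∀ x : Fin k → ℝ, ℓ x = ∑ j, α j * x j := by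
    intro x
    simp [hℓ, ContinuousLinearMap.sum_apply, smul_eq_mul]
  set R' := max R 0 with hR'
  have hR0 : 0 ≤ R' := le_max_right _ _
  set C := ‖Lc A‖ + 2 * ‖ℓ‖ * R' with hC
  have hC0 : 0 ≤ C := by positivity
  refine ⟨C.toNNReal, ?_⟩
  rw [lipschitzOnWith_iff_dist_le_mul]
  intro x hx y hy
  rw [Metric.mem_closedBall, dist_zero_right] at hx hy
  have hx' : ‖x‖ ≤ R' := le_trans hx (le_max_left _ _)
  have hy' : ‖y‖ ≤ R' := le_trans hy (le_max_left _ _)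
  rw [dist_eq_norm, dist_eq_norm, Real.coe_toNNReal _ hC0]
  have key : (A.mulVec x - (∑ j, α j * x j) • x) - (A.mulVec y - (∑ j, α j * y j) • y)
      = Lc A (x - y) - (ℓ x • (x - y) + ℓ (x - y) • y) := by
    rw [← hℓa x, ← hℓa y, map_sub ℓ x y, map_sub (Lc A) x y, Lc_apply, Lc_apply]
    module
  rw [key]
  have h1 : ‖Lc A (x - y)‖ ≤ ‖Lc A‖ * ‖x - y‖ := (Lc A).le_opNorm _
  have h2 := ℓ.le_opNorm x
  have h3 := ℓ.le_opNorm (x - y)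
  have h4 := norm_sub_le (Lc A (x - y)) (ℓ x • (x - y) + ℓ (x - y) • y)
  have h5 := norm_add_le (ℓ x • (x - y)) (ℓ (x - y) • y)
  rw [norm_smul, norm_smul] at h5
  have hnn : (0:ℝ) ≤ ‖x - y‖ := norm_nonneg _
  have hℓnn : (0:ℝ) ≤ ‖ℓ‖ := norm_nonneg _
  have h6 : ‖ℓ x‖ * ‖x - y‖ ≤ (‖ℓ‖ * R') * ‖x - y‖ := by
    apply mul_le_mul_of_nonneg_right _ hnn
    exact le_trans h2 (mul_le_mul_of_nonneg_left hx' hℓnn)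
  have h7 : ‖ℓ (x - y)‖ * ‖y‖ ≤ ‖ℓ‖ * ‖x - y‖ * R' :=
    mul_le_mul h3 hy' (norm_nonneg _) (by positivity)
  have hCexp : C * ‖x - y‖
      = ‖Lc A‖ * ‖x - y‖ + (‖ℓ‖ * R') * ‖x - y‖ + ‖ℓ‖ * ‖x - y‖ * R' := by
    rw [hC]; ring
  linarith

noncomputable def Mm (A : Matrix (Fin k) (Fin k) ℝ) : Matrix (Fin k) (Fin k) ℝ :=
  Matrix.of fun i j => Ee A 1 (Pi.single j (1:ℝ)) i

lemma Mm_mulVec (A : Matrix (Fin k) (Fin k) ℝ) (v : Fin k → ℝ) :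
    (Mm A).mulVec v = Ee A 1 v := by
  classical
  have hv : v = ∑ j, v j • (Pi.single j (1:ℝ) : Fin k → ℝ) := by
    funext i
    simp [Pi.single_apply, Finset.sum_apply, mul_ite, Finset.sum_ite_eq']
  funext i
  conv_rhs => rw [hv]
  have : Ee A 1 (∑ j, v j • (Pi.single j (1:ℝ) : Fin k → ℝ))
      = ∑ j, v j • Ee A 1 (Pi.single j (1:ℝ) : Fin k → ℝ) := by
    unfold Ee
    rw [map_sum]
    congr 1
    funext j
    rw [_root_.map_smul]
  rw [this]
  simp only [Matrix.mulVec, dotProduct, Finset.sum_apply, Pi.smul_apply, smul_eq_mul, Mm,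
    Matrix.of_apply]
  exact Finset.sum_congr rfl fun j _ => mul_comm _ _

lemma step_bounds (M : Matrix (Fin k) (Fin k) ℝ) (hM : ∀ i j, 0 ≤ M i j)
    (what : Fin k → ℝ) (hwpos : ∀ i, 0 < what i) (μ : ℝ) (hμ : 0 < μ)
    (hMw : M.mulVec what = μ • what) (δ : ℝ) (hδ0 : 0 ≤ δ)
    (hδ : ∀ i j, δ * (μ * what i) ≤ M i j * what j)
    (v : Fin k → ℝ) (a b : ℝ) (ha0 : 0 ≤ a) (hab : a ≤ b)
    (habv : ∀ j, a * what j ≤ v j ∧ v j ≤ b * what j)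
    (jb : Fin k) (hjb : v jb = b * what jb) (ja : Fin k) (hja : v ja = a * what ja) :
    ∀ i, μ * (a + δ * (b - a)) * what i ≤ M.mulVec v i ∧
         M.mulVec v i ≤ μ * (b - δ * (b - a)) * what i := by
  classical
  intro i
  have hsum : ∑ j, M i j * what j = μ * what i := by
    have := congrFun hMw i
    simpa [Matrix.mulVec, dotProduct] using this
  have hMvi : M.mulVec v i = ∑ j, M i j * v j := by
    simp [Matrix.mulVec, dotProduct]
  constructor
  · -- lower bound, using jb
    have hsplit : ∑ j, M i j * v j
        = M i jb * v jb + ∑ j ∈ Finset.univ.erase jb, M i j * v j :=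
      (Finset.add_sum_erase _ _ (Finset.mem_univ jb)).symm
    have hsplit2 : ∑ j, M i j * what j
        = M i jb * what jb + ∑ j ∈ Finset.univ.erase jb, M i j * what j :=
      (Finset.add_sum_erase _ _ (Finset.mem_univ jb)).symm
    have hbound : ∑ j ∈ Finset.univ.erase jb, (M i j * (a * what j))
        ≤ ∑ j ∈ Finset.univ.erase jb, M i j * v j := by
      apply Finset.sum_le_sum
      intro j _
      exact mul_le_mul_of_nonneg_left (habv j).1 (hM i j)
    have hfac : ∑ j ∈ Finset.univ.erase jb, (M i j * (a * what j))
        = a * ∑ j ∈ Finset.univ.erase jb, M i j * what j := by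
      rw [Finset.mul_sum]
      exact Finset.sum_congr rfl fun j _ => by ring
    have hδi := hδ i jb
    have hwi := (hwpos i).le
    rw [hMvi, hsplit, hjb]
    nlinarith [mul_nonneg (sub_nonneg.2 hab) (sub_nonneg.2 (hδ i jb))]
  · -- upper bound, using ja
    have hsplit : ∑ j, M i j * v j
        = M i ja * v ja + ∑ j ∈ Finset.univ.erase ja, M i j * v j :=
      (Finset.add_sum_erase _ _ (Finset.mem_univ ja)).symm
    have hsplit2 : ∑ j, M i j * what j
        = M i ja * what ja + ∑ j ∈ Finset.univ.erase ja, M i j * what j :=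
      (Finset.add_sum_erase _ _ (Finset.mem_univ ja)).symm
    have hbound : ∑ j ∈ Finset.univ.erase ja, M i j * v j
        ≤ ∑ j ∈ Finset.univ.erase ja, (M i j * (b * what j)) := by
      apply Finset.sum_le_sum
      intro j _
      exact mul_le_mul_of_nonneg_left (habv j).2 (hM i j)
    have hfac : ∑ j ∈ Finset.univ.erase ja, (M i j * (b * what j))
        = b * ∑ j ∈ Finset.univ.erase ja, M i j * what j := by
      rw [Finset.mul_sum]
      exact Finset.sum_congr rfl fun j _ => by ring
    have hδi := hδ i ja
    have hwi := (hwpos i).le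
    rw [hMvi, hsplit, hja]
    nlinarith [mul_nonneg (sub_nonneg.2 hab) (sub_nonneg.2 (hδ i ja))]

end EigenAux

open EigenAux in
/-- For a column-stochastic `Q`, positive fitnesses `α`, and primitive
`Qα = Q diag(α)` with Perron eigenvector (unique rest point) `what`, every solution of
Eigen's quasispecies system starting in the simplex converges to `what` exponentially:
`|w i (t) - what i| ≤ K e^{-κ t}` for some `K, κ > 0`. -/
theorem eigen_solutions_converge_exponentially
    (k : ℕ) (Q : Matrix (Fin k) (Fin k) ℝ)
    (hQnn : ∀ i j, 0 ≤ Q i j) (hQst : ∀ j, ∑ i, Q i j = 1)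
    (α : Fin k → ℝ) (hα : ∀ j, 0 < α j)
    (hprim : ∃ p : ℕ, 0 < p ∧ ∀ i j, 0 < ((Q * Matrix.diagonal α) ^ p) i j)
    (what : Fin k → ℝ) (fbar : ℝ)
    (hwpos : ∀ i, 0 < what i) (hwsum : ∑ i, what i = 1)
    (hweig : (Q * Matrix.diagonal α).mulVec what = fbar • what)
    (w : ℝ → Fin k → ℝ)
    (hw : ∀ t : ℝ, 0 ≤ t → ∀ i : Fin k,
      HasDerivAt (fun s => w s i)
        (((Q * Matrix.diagonal α).mulVec (w t)) i - w t i * ∑ j, α j * w t j) t)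
    (h0nn : ∀ i, 0 ≤ w 0 i) (h0sum : ∑ i, w 0 i = 1) :
    ∃ K : ℝ, 0 < K ∧ ∃ κ : ℝ, 0 < κ ∧
      ∀ (i : Fin k) (t : ℝ), 0 ≤ t → |w t i - what i| ≤ K * Real.exp (-κ * t) := by
  classical
  rcases Nat.eq_zero_or_pos k with hk0 | hk
  · exfalso; subst hk0; simpa using h0sum
  haveI hne : Nonempty (Fin k) := ⟨⟨0, hk⟩⟩
  set A := Q * Matrix.diagonal α with hA
  obtain ⟨p, hp, hppos⟩ := hprim
  have hAnn : ∀ i j, 0 ≤ A i j := by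
    intro i j; rw [hA, Matrix.mul_diagonal]; exact mul_nonneg (hQnn i j) (hα j).le
  have hsumA : ∀ x : Fin k → ℝ, ∑ i, A.mulVec x i = ∑ j, α j * x j := by
    intro x
    simp only [Matrix.mulVec, dotProduct]
    rw [Finset.sum_comm]
    apply Finset.sum_congr rfl
    intro j _
    rw [← Finset.sum_mul]
    have : ∀ i, A i j = Q i j * α j := fun i => by rw [hA, Matrix.mul_diagonal]
    rw [Finset.sum_congr rfl fun i _ => this i, ← Finset.sum_mul, hQst j]
    ring
  -- the linear semigroup
  set w0 := w 0 with hw0def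
  set φ : ℝ → Fin k → ℝ := fun t => EigenAux.Ee A t w0 with hφdef
  set S : ℝ → ℝ := fun t => ∑ i, φ t i with hSdef
  have hφ0 : φ 0 = w0 := by
    rw [hφdef]
    unfold EigenAux.Ee
    simp [NormedSpace.exp_zero]
  have hφnn : ∀ t, 0 ≤ t → ∀ i, 0 ≤ φ t i := fun t ht i =>
    EigenAux.Ee_nonneg hAnn ht h0nn i
  have hφge : ∀ t, 0 ≤ t → ∀ i, w0 i ≤ φ t i := fun t ht i =>
    EigenAux.Ee_ge_self hAnn ht h0nn i
  have hS1 : ∀ t, 0 ≤ t → 1 ≤ S t := by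
    intro t ht
    calc (1:ℝ) = ∑ i, w0 i := h0sum.symm
    _ ≤ ∑ i, φ t i := Finset.sum_le_sum fun i _ => hφge t ht i
  have hSpos : ∀ t, 0 ≤ t → 0 < S t := fun t ht => lt_of_lt_of_le one_pos (hS1 t ht)
  set u : ℝ → Fin k → ℝ := fun t i => φ t i / S t with hudef
  have huderiv : ∀ t, 0 ≤ t → ∀ i, HasDerivAt (fun s => u s i)
      (A.mulVec (u t) i - u t i * ∑ j, α j * u t j) t := by
    intro t ht i
    have h1 := EigenAux.Ee_deriv_entry A w0 t i
    have h2 : HasDerivAt S (∑ j, α j * φ t j) t := by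
      have h3 := HasDerivAt.fun_sum (fun i (_ : i ∈ Finset.univ) => EigenAux.Ee_deriv_entry A w0 t i)
      have h4 : ∑ i, A.mulVec (EigenAux.Ee A t w0) i = ∑ j, α j * φ t j := hsumA _
      rw [h4] at h3
      exact h3
    have hSne : S t ≠ 0 := ne_of_gt (hSpos t ht)
    have h3 := h1.div h2 hSne
    have hmv : A.mulVec (fun j => φ t j / S t) i = A.mulVec (φ t) i / S t := by
      simp only [Matrix.mulVec, dotProduct]
      rw [Finset.sum_div]
      exact Finset.sum_congr rfl fun j _ => by ring
    have hval : A.mulVec (u t) i - u t i * ∑ j, α j * u t j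
        = (A.mulVec (EigenAux.Ee A t w0) i * S t - φ t i * ∑ j, α j * φ t j) / S t ^ 2 := by
      rw [hudef]
      simp only
      rw [hmv]
      have hsum2 : ∑ j, α j * (φ t j / S t) = (∑ j, α j * φ t j) / S t := by
        rw [Finset.sum_div]
        exact Finset.sum_congr rfl fun j _ => by ring
      rw [hsum2]
      field_simp
      ring
    rw [hval]
    exact h3
  have hwu : ∀ t, 0 ≤ t → w t = u t := by
    have main : ∀ T, 0 < T → Set.EqOn w u (Set.Icc (0:ℝ) T) := by
      intro T hT
      have hwc : ContinuousOn w (Set.Icc 0 T) := by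
        intro t ht
        exact (continuousAt_pi' (fun i => (hw t ht.1 i).continuousAt)).continuousWithinAt
      have huc : ContinuousOn u (Set.Icc 0 T) := by
        intro t ht
        exact (continuousAt_pi' (fun i => (huderiv t ht.1 i).continuousAt)).continuousWithinAt
      obtain ⟨R1, hR1⟩ := isCompact_Icc.exists_bound_of_continuousOn hwc
      obtain ⟨R2, hR2⟩ := isCompact_Icc.exists_bound_of_continuousOn huc
      set R := max R1 R2 with hR
      obtain ⟨K, hK⟩ := EigenAux.exists_lipschitzOnWith A α R
      have hderivw : ∀ t ∈ Set.Ico (0:ℝ) T, HasDerivWithinAt w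
          (A.mulVec (w t) - (∑ j, α j * w t j) • (w t)) (Set.Ici t) t := by
        intro t ht
        have hD : HasDerivAt w
            (fun i => A.mulVec (w t) i - w t i * ∑ j, α j * w t j) t :=
          hasDerivAt_pi.2 (fun i => hw t ht.1 i)
        have he : (fun i => A.mulVec (w t) i - w t i * ∑ j, α j * w t j)
            = A.mulVec (w t) - (∑ j, α j * w t j) • (w t) := by
          funext i
          simp only [Pi.sub_apply, Pi.smul_apply, smul_eq_mul]
          ring
        rw [he] at hD
        exact hD.hasDerivWithinAt
      have hderivu : ∀ t ∈ Set.Ico (0:ℝ) T, HasDerivWithinAt u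
          (A.mulVec (u t) - (∑ j, α j * u t j) • (u t)) (Set.Ici t) t := by
        intro t ht
        have hD : HasDerivAt u
            (fun i => A.mulVec (u t) i - u t i * ∑ j, α j * u t j) t :=
          hasDerivAt_pi.2 (fun i => huderiv t ht.1 i)
        have he : (fun i => A.mulVec (u t) i - u t i * ∑ j, α j * u t j)
            = A.mulVec (u t) - (∑ j, α j * u t j) • (u t) := by
          funext i
          simp only [Pi.sub_apply, Pi.smul_apply, smul_eq_mul]
          ring
        rw [he] at hD
        exact hD.hasDerivWithinAt
      have hmemw : ∀ t ∈ Set.Ico (0:ℝ) T, w t ∈ Metric.closedBall 0 R := by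
        intro t ht
        rw [Metric.mem_closedBall, dist_zero_right]
        exact le_trans (hR1 t (Set.Ico_subset_Icc_self ht)) (le_max_left _ _)
      have hmemu : ∀ t ∈ Set.Ico (0:ℝ) T, u t ∈ Metric.closedBall 0 R := by
        intro t ht
        rw [Metric.mem_closedBall, dist_zero_right]
        exact le_trans (hR2 t (Set.Ico_subset_Icc_self ht)) (le_max_right _ _)
      have h00 : w 0 = u 0 := by
        rw [hudef]
        funext j
        simp only
        have hS0 : S 0 = 1 := by
          rw [hSdef]
          simp only
          have : ∀ i, φ 0 i = w0 i := fun i => congrFun hφ0 i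
          rw [Finset.sum_congr rfl fun i _ => this i]
          exact h0sum
        rw [hS0, congrFun hφ0 j, div_one, hw0def]
      exact ODE_solution_unique_of_mem_Icc_right
        (v := fun _ x => A.mulVec x - (∑ j, α j * x j) • x)
        (s := fun _ => Metric.closedBall 0 R) (K := K)
        (fun _ _ => hK) hwc hderivw hmemw huc hderivu hmemu h00
    intro t ht
    rcases eq_or_lt_of_le ht with h | h
    · rw [← h]
      exact main 1 one_pos (Set.mem_Icc.2 ⟨le_rfl, zero_le_one⟩)
    · exact main t h (Set.mem_Icc.2 ⟨ht, le_rfl⟩)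
  -- basic simplex facts
  have hwnn : ∀ t, 0 ≤ t → ∀ i, 0 ≤ w t i := by
    intro t ht i
    rw [hwu t ht]
    exact div_nonneg (hφnn t ht i) (hSpos t ht).le
  have hwsum1 : ∀ t, 0 ≤ t → ∑ i, w t i = 1 := by
    intro t ht
    rw [hwu t ht]
    rw [hudef]
    simp only
    rw [← Finset.sum_div]
    rw [div_eq_one_iff_eq (ne_of_gt (hSpos t ht))]
  -- semigroup property for w
  have hkey : ∀ t, 0 ≤ t → ∀ s, 0 ≤ s → ∀ i,
      w (t + s) i = (S t / S (t + s)) * EigenAux.Ee A s (w t) i := by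
    intro t ht s hs i
    have hts : 0 ≤ t + s := by linarith
    have h1 : φ (t + s) = EigenAux.Ee A s (φ t) := by
      rw [hφdef]
      simp only
      rw [show t + s = s + t by ring, EigenAux.Ee_add]
    have h2 : φ t = S t • w t := by
      rw [hwu t ht, hudef]
      funext j
      simp only [Pi.smul_apply, smul_eq_mul]
      rw [mul_div_cancel₀ _ (ne_of_gt (hSpos t ht))]
    have h2' : w t = u t := hwu t ht
    have h3 : EigenAux.Ee A s (φ t) = S t • EigenAux.Ee A s (w t) := by
      rw [h2, EigenAux.Ee_smul]
    have h4 := congrFun (hwu (t+s) hts) i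
    rw [h4, hudef]
    simp only
    rw [h1, h3]
    simp only [Pi.smul_apply, smul_eq_mul]
    ring
  -- the matrix M and its spectral data
  set μ : ℝ := Real.exp fbar with hμdef
  have hμpos : 0 < μ := Real.exp_pos _
  set M : Matrix (Fin k) (Fin k) ℝ := EigenAux.Mm A with hMdef
  have hMnn : ∀ i j, 0 ≤ M i j := by
    intro i j
    apply EigenAux.Ee_nonneg hAnn zero_le_one (fun l => ?_) i
    rw [Pi.single_apply]
    split <;> norm_num
  have hMpos : ∀ i j, 0 < M i j := by
    intro i j
    have hsing : ∀ l, 0 ≤ (Pi.single j (1:ℝ) : Fin k → ℝ) l := by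
      intro l
      rw [Pi.single_apply]
      split <;> norm_num
    have h := EigenAux.Ee_ge_term hAnn zero_le_one hsing p i
    have h2 : (A ^ p).mulVec (Pi.single j (1:ℝ) : Fin k → ℝ) i = (A ^ p) i j := by
      rw [Matrix.mulVec_single]
      exact mul_one _
    rw [h2] at h
    have h3 : 0 < ((p.factorial : ℝ))⁻¹ * 1 ^ p * (A ^ p) i j := by
      have := hppos i j
      positivity
    exact lt_of_lt_of_le h3 h
  have hMeig : M.mulVec what = μ • what := by
    rw [hMdef, EigenAux.Mm_mulVec, EigenAux.Ee_eigen hweig, one_mul]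
  -- δ
  set δ : ℝ := min (Finset.univ.inf' Finset.univ_nonempty
    (fun pr : Fin k × Fin k => (M pr.1 pr.2 * what pr.2) / (μ * what pr.1))) (1/3) with hδdef
  have hδpos : 0 < δ := by
    rw [hδdef, lt_min_iff]
    refine ⟨?_, by norm_num⟩
    rw [Finset.lt_inf'_iff]
    intro pr _
    exact div_pos (mul_pos (hMpos pr.1 pr.2) (hwpos pr.2)) (mul_pos hμpos (hwpos pr.1))
  have hδ13 : δ ≤ 1/3 := min_le_right _ _
  have hδle : ∀ i j, δ * (μ * what i) ≤ M i j * what j := by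
    intro i j
    have h1 : δ ≤ (M i j * what j) / (μ * what i) :=
      le_trans (min_le_left _ _) (Finset.inf'_le _ (Finset.mem_univ (i, j)))
    rw [le_div_iff₀ (mul_pos hμpos (hwpos i))] at h1
    linarith [h1]
  -- ratios
  set r : ℝ → Fin k → ℝ := fun t i => w t i / what i with hrdef
  set aF : ℝ → ℝ := fun t => Finset.univ.inf' Finset.univ_nonempty (r t) with haFdef
  set bF : ℝ → ℝ := fun t => Finset.univ.sup' Finset.univ_nonempty (r t) with hbFdef
  have hr_lb : ∀ t j, aF t * what j ≤ w t j := by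
    intro t j
    have h : aF t ≤ r t j := Finset.inf'_le (r t) (Finset.mem_univ j)
    calc aF t * what j ≤ (w t j / what j) * what j :=
          mul_le_mul_of_nonneg_right h (hwpos j).le
    _ = w t j := div_mul_cancel₀ _ (ne_of_gt (hwpos j))
  have hr_ub : ∀ t j, w t j ≤ bF t * what j := by
    intro t j
    have h : r t j ≤ bF t := Finset.le_sup' (r t) (Finset.mem_univ j)
    have h2 := mul_le_mul_of_nonneg_right h (hwpos j).le
    calc w t j = (w t j / what j) * what j := (div_mul_cancel₀ _ (ne_of_gt (hwpos j))).symm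
    _ ≤ bF t * what j := h2
  have haF0 : ∀ t, 0 ≤ t → 0 ≤ aF t := by
    intro t ht
    apply Finset.le_inf'
    intro j _
    exact div_nonneg (hwnn t ht j) (hwpos j).le
  have haF1 : ∀ t, 0 ≤ t → aF t ≤ 1 := by
    intro t ht
    have h2 : ∑ i, aF t * what i ≤ 1 := by
      rw [← hwsum1 t ht]
      exact Finset.sum_le_sum fun i _ => hr_lb t i
    rwa [← Finset.mul_sum, hwsum, mul_one] at h2
  have hbF1 : ∀ t, 0 ≤ t → 1 ≤ bF t := by
    intro t ht
    have h2 : (1:ℝ) ≤ ∑ i, bF t * what i := by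
      rw [← hwsum1 t ht]
      exact Finset.sum_le_sum fun i _ => hr_ub t i
    rwa [← Finset.mul_sum, hwsum, mul_one] at h2
  -- one step with contraction
  have hab0 : ∀ t, 0 ≤ t → aF t ≤ bF t := fun t ht =>
    le_trans (Finset.inf'_le (r t) (Finset.mem_univ (Classical.arbitrary _)))
      (Finset.le_sup' (r t) (Finset.mem_univ _))
  have hstep : ∀ t, 0 ≤ t → ∃ c : ℝ, 0 < c ∧
      (∀ i, c * μ * (aF t + δ * (bF t - aF t)) ≤ r (t+1) i ∧
        r (t+1) i ≤ c * μ * (bF t - δ * (bF t - aF t))) := by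
    intro t ht
    have ht1 : (0:ℝ) ≤ t + 1 := by linarith
    set c := S t / S (t+1) with hcdef
    have hc : 0 < c := div_pos (hSpos t ht) (hSpos (t+1) ht1)
    refine ⟨c, hc, ?_⟩
    obtain ⟨jb, _, hjb⟩ := Finset.exists_mem_eq_sup' Finset.univ_nonempty (r t)
    obtain ⟨ja, _, hja⟩ := Finset.exists_mem_eq_inf' Finset.univ_nonempty (r t)
    have hjb' : w t jb = bF t * what jb := by
      have : bF t = w t jb / what jb := hjb
      rw [this, div_mul_cancel₀ _ (ne_of_gt (hwpos jb))]
    have hja' : w t ja = aF t * what ja := by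
      have : aF t = w t ja / what ja := hja
      rw [this, div_mul_cancel₀ _ (ne_of_gt (hwpos ja))]
    have hsb := EigenAux.step_bounds M hMnn what hwpos μ hμpos hMeig δ hδpos.le hδle (w t)
      (aF t) (bF t) (haF0 t ht) (hab0 t ht) (fun j => ⟨hr_lb t j, hr_ub t j⟩)
      jb hjb' ja hja'
    intro i
    have hw1 : w (t + 1) i = c * M.mulVec (w t) i := by
      rw [hkey t ht 1 zero_le_one i, hMdef, EigenAux.Mm_mulVec]
    have hri : r (t+1) i = (c * M.mulVec (w t) i) / what i := by
      rw [hrdef]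
      simp only
      rw [hw1]
    constructor
    · rw [hri, le_div_iff₀ (hwpos i)]
      have h1 := mul_le_mul_of_nonneg_left (hsb i).1 hc.le
      nlinarith [h1]
    · rw [hri, div_le_iff₀ (hwpos i)]
      have h1 := mul_le_mul_of_nonneg_left (hsb i).2 hc.le
      nlinarith [h1]
  -- monotone step
  have hmono : ∀ t, 0 ≤ t → ∀ s, 0 ≤ s → ∃ c : ℝ, 0 < c ∧
      (∀ i, c * (aF t) ≤ r (t+s) i ∧ r (t+s) i ≤ c * (bF t)) := by
    intro t ht s hs
    have hts : (0:ℝ) ≤ t + s := by linarith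
    set c := (S t / S (t+s)) * Real.exp (s * fbar) with hcdef
    have hc0 : 0 < S t / S (t+s) := div_pos (hSpos t ht) (hSpos (t+s) hts)
    have hc : 0 < c := mul_pos hc0 (Real.exp_pos _)
    refine ⟨c, hc, fun i => ?_⟩
    have hub : EigenAux.Ee A s (w t) i ≤ Real.exp (s * fbar) * (bF t * what i) := by
      have h1 := EigenAux.Ee_mono hAnn hs (v := w t) (u := bF t • what)
        (fun j => by simpa [smul_eq_mul] using hr_ub t j) i
      have h2 : EigenAux.Ee A s (bF t • what) i = Real.exp (s * fbar) * (bF t * what i) := by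
        rw [EigenAux.Ee_smul, EigenAux.Ee_eigen hweig]
        simp only [Pi.smul_apply, smul_eq_mul]
        ring
      linarith [h1, h2.le]
    have hlb : Real.exp (s * fbar) * (aF t * what i) ≤ EigenAux.Ee A s (w t) i := by
      have h1 := EigenAux.Ee_mono hAnn hs (v := aF t • what) (u := w t)
        (fun j => by simpa [smul_eq_mul] using hr_lb t j) i
      have h2 : EigenAux.Ee A s (aF t • what) i = Real.exp (s * fbar) * (aF t * what i) := by
        rw [EigenAux.Ee_smul, EigenAux.Ee_eigen hweig]
        simp only [Pi.smul_apply, smul_eq_mul]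
        ring
      linarith [h1, h2.ge]
    have hri : r (t+s) i = ((S t / S (t+s)) * EigenAux.Ee A s (w t) i) / what i := by
      rw [hrdef]
      simp only
      rw [hkey t ht s hs i]
    constructor
    · rw [hri, le_div_iff₀ (hwpos i), hcdef]
      have h1 := mul_le_mul_of_nonneg_left hlb hc0.le
      nlinarith [h1]
    · rw [hri, div_le_iff₀ (hwpos i), hcdef]
      have h1 := mul_le_mul_of_nonneg_left hub hc0.le
      nlinarith [h1]
  set lam : ℝ := 1 - 2*δ with hlamdef
  have hlam0 : 0 < lam := by rw [hlamdef]; linarith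
  have hlam1 : lam < 1 := by rw [hlamdef]; linarith
  set D : ℝ → ℝ := fun t => (bF t - aF t) / aF t with hDdef
  have hab : ∀ t, 0 ≤ t → aF t ≤ bF t := fun t ht =>
    le_trans (haF1 t ht) (hbF1 t ht)
  -- consequences of hstep
  have hC1 : ∀ t, 0 ≤ t → 0 < aF (t+1) ∧ bF (t+1) ≤ aF (t+1) / δ := by
    intro t ht
    obtain ⟨c, hc, hcb⟩ := hstep t ht
    have hbpos : 0 < bF t := lt_of_lt_of_le one_pos (hbF1 t ht)
    have ha' : c * μ * (δ * bF t) ≤ aF (t+1) := by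
      apply Finset.le_inf'
      intro j _
      have h1 := (hcb j).1
      nlinarith [mul_nonneg (mul_nonneg (mul_nonneg hc.le hμpos.le)
        (by linarith : (0:ℝ) ≤ 1 - δ)) (haF0 t ht)]
    have ha'pos : 0 < aF (t+1) := by
      have : 0 < c * μ * (δ * bF t) := by positivity
      linarith
    refine ⟨ha'pos, ?_⟩
    have hb' : bF (t+1) ≤ c * μ * bF t := by
      apply Finset.sup'_le
      intro j _
      have h1 := (hcb j).2
      nlinarith [mul_nonneg (mul_nonneg (mul_nonneg hc.le hμpos.le) hδpos.le)
        (sub_nonneg.2 (hab0 t ht))]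
    rw [le_div_iff₀ hδpos]
    calc bF (t+1) * δ ≤ (c * μ * bF t) * δ := mul_le_mul_of_nonneg_right hb' hδpos.le
    _ = c * μ * (δ * bF t) := by ring
    _ ≤ aF (t+1) := ha' 
  have hC2 : ∀ t, 0 ≤ t → 0 < aF t → D (t+1) ≤ lam * D t := by
    intro t ht hat
    obtain ⟨c, hc, hcb⟩ := hstep t ht
    have hb' : bF (t+1) ≤ c*μ*(bF t - δ*(bF t - aF t)) :=
      Finset.sup'_le _ _ (fun j _ => (hcb j).2)
    have ha' : c*μ*(aF t + δ*(bF t - aF t)) ≤ aF (t+1) :=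
      Finset.le_inf' _ _ (fun j _ => (hcb j).1)
    have hosc : bF (t+1) - aF (t+1) ≤ c * μ * lam * (bF t - aF t) := by
      rw [hlamdef]
      nlinarith
    have ha2 : c * μ * aF t ≤ aF (t+1) := by
      nlinarith [mul_nonneg (mul_nonneg (mul_nonneg hc.le hμpos.le) hδpos.le)
        (sub_nonneg.2 (hab0 t ht))]
    have hcma : 0 < c * μ * aF t := by positivity
    have h1 : (bF (t+1) - aF (t+1)) / aF (t+1) ≤ (c*μ*lam*(bF t - aF t)) / (c*μ*aF t) :=
      div_le_div₀ (mul_nonneg (mul_nonneg (mul_nonneg hc.le hμpos.le) hlam0.le)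
        (sub_nonneg.2 (hab0 t ht))) hosc hcma ha2
    have h2 : (c*μ*lam*(bF t - aF t)) / (c*μ*aF t) = lam * ((bF t - aF t)/aF t) := by
      field_simp
    rw [hDdef]
    simp only
    rw [← h2]
    exact h1
  have hC3 : ∀ t, 0 ≤ t → 0 < aF t → ∀ s, 0 ≤ s → D (t+s) ≤ D t := by
    intro t ht hat s hs
    obtain ⟨c, hc, hcb⟩ := hmono t ht s hs
    have hb' : bF (t+s) ≤ c * bF t := Finset.sup'_le _ _ fun j _ => (hcb j).2
    have ha' : c * aF t ≤ aF (t+s) := Finset.le_inf' _ _ fun j _ => (hcb j).1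
    have h1 : (bF (t+s) - aF (t+s)) / aF (t+s) ≤ (c * (bF t - aF t)) / (c * aF t) :=
      div_le_div₀ (by nlinarith [sub_nonneg.2 (hab0 t ht)]) (by linarith)
        (mul_pos hc hat) ha'
    have h2 : (c * (bF t - aF t)) / (c * aF t) = (bF t - aF t)/aF t :=
      mul_div_mul_left _ _ (ne_of_gt hc)
    rw [hDdef]
    simp only
    rw [← h2]
    exact h1
  have haFpos : ∀ t, 1 ≤ t → 0 < aF t := by
    intro t ht
    have := (hC1 (t-1) (by linarith)).1
    simpa using this
  have hD0 : ∀ t, 1 ≤ t → 0 ≤ D t := by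
    intro t ht
    exact div_nonneg (by linarith [hab t (by linarith)]) (haFpos t ht).le
  have hD1 : D 1 ≤ 1/δ := by
    have h := hC1 0 le_rfl
    have ha1 : 0 < aF (0+1) := h.1
    have h2 : bF (0+1) * δ ≤ aF (0+1) := by
      have h3 := mul_le_mul_of_nonneg_right h.2 hδpos.le
      rwa [div_mul_cancel₀ _ (ne_of_gt hδpos)] at h3
    have h4 : (0:ℝ) ≤ aF (0+1) * δ := mul_nonneg ha1.le hδpos.le
    rw [hDdef]
    simp only
    rw [show (1:ℝ) = 0+1 by ring, div_le_div_iff₀ ha1 hδpos]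
    nlinarith
  have hDn : ∀ n : ℕ, D (1 + n) ≤ lam ^ n * (1/δ) := by
    intro n
    induction n with
    | zero => simpa using hD1
    | succ n ih =>
      have h1 : (1:ℝ) + (n+1 : ℕ) = (1 + (n:ℝ)) + 1 := by push_cast; ring
      rw [h1]
      have h2 := hC2 (1 + (n:ℝ)) (by positivity) (haFpos _ (by simp [le_add_iff_nonneg_right]))
      calc D ((1 + (n:ℝ)) + 1) ≤ lam * D (1 + (n:ℝ)) := h2
      _ ≤ lam * (lam ^ n * (1/δ)) := by
          apply mul_le_mul_of_nonneg_left ih hlam0.le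
      _ = lam ^ (n+1) * (1/δ) := by ring
  set κ : ℝ := -Real.log lam with hκdef
  have hκpos : 0 < κ := by
    rw [hκdef, neg_pos]
    exact Real.log_neg hlam0 hlam1
  have hDt : ∀ t, 1 ≤ t → D t ≤ (1/δ) * Real.exp (-κ * (t - 2)) := by
    intro t ht
    set n := ⌊t - 1⌋₊ with hn
    have hn1 : (n:ℝ) ≤ t - 1 := Nat.floor_le (by linarith)
    have hn2 : t - 1 < n + 1 := Nat.lt_floor_add_one (t-1)
    have h1n : (1:ℝ) ≤ 1 + (n:ℝ) := by linarith [Nat.cast_nonneg (α := ℝ) n]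
    have h1 : D t ≤ D (1 + n) := by
      have h := hC3 (1 + (n:ℝ)) (by positivity) (haFpos _ h1n) (t - (1 + n)) (by linarith)
      rwa [show (1 + (n:ℝ)) + (t - (1 + (n:ℝ))) = t by ring] at h
    have h2 : D (1 + (n:ℝ)) ≤ lam ^ n * (1/δ) := hDn n
    have h3 : lam ^ n ≤ Real.exp (-κ * (t - 2)) := by
      have he : lam ^ n = Real.exp ((n:ℝ) * Real.log lam) := by
        rw [← Real.exp_log hlam0, ← Real.exp_nat_mul, Real.log_exp]
      rw [he]
      apply Real.exp_le_exp.2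
      have hlog : Real.log lam < 0 := Real.log_neg hlam0 hlam1
      rw [hκdef]
      nlinarith
    calc D t ≤ lam ^ n * (1/δ) := le_trans h1 h2
    _ ≤ Real.exp (-κ*(t-2)) * (1/δ) :=
        mul_le_mul_of_nonneg_right h3 (by positivity)
    _ = (1/δ) * Real.exp (-κ*(t-2)) := by ring
  -- final bound
  refine ⟨Real.exp (2*κ) / δ + Real.exp κ, by positivity, κ, hκpos, ?_⟩
  intro i t ht
  by_cases h1 : 1 ≤ t
  · -- large time
    have hD := hDt t h1
    have habs : |w t i - what i| ≤ D t := by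
      have ht0 : (0:ℝ) ≤ t := by linarith
      have hapos := haFpos t h1
      have hwhatle : what i ≤ 1 := by
        calc what i ≤ ∑ j, what j :=
            Finset.single_le_sum (fun j _ => (hwpos j).le) (Finset.mem_univ i)
        _ = 1 := hwsum
      have hub := hr_ub t i
      have hlb := hr_lb t i
      have ha1 := haF1 t ht0
      have hb1 := hbF1 t ht0
      have hDta : D t * aF t = bF t - aF t := div_mul_cancel₀ _ (ne_of_gt hapos)
      have hD0' := hD0 t h1
      have hint1 : (0:ℝ) ≤ (bF t - aF t) * (1 - what i) :=
        mul_nonneg (by linarith [hab0 t ht0]) (by linarith)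
      have hint2 : (0:ℝ) ≤ D t * (1 - aF t) := mul_nonneg hD0' (by linarith)
      rw [abs_le]
      constructor
      · nlinarith [hwpos i]
      · nlinarith [hwpos i]
    calc |w t i - what i| ≤ D t := habs
    _ ≤ (1/δ) * Real.exp (-κ * (t-2)) := hD
    _ = (Real.exp (2*κ) / δ) * Real.exp (-κ * t) := by
        rw [show -κ * (t - 2) = 2*κ + (-κ * t) by ring, Real.exp_add]
        ring
    _ ≤ (Real.exp (2*κ) / δ + Real.exp κ) * Real.exp (-κ * t) := by
        apply mul_le_mul_of_nonneg_right _ (Real.exp_pos _).le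
        linarith [Real.exp_pos κ]
  · -- small time
    push_neg at h1
    have hwle : w t i ≤ 1 := by
      have := hwsum1 t ht
      calc w t i ≤ ∑ j, w t j := Finset.single_le_sum (fun j _ => hwnn t ht j) (Finset.mem_univ i)
      _ = 1 := this
    have hwhatle : what i ≤ 1 := by
      calc what i ≤ ∑ j, what j := Finset.single_le_sum (fun j _ => (hwpos j).le) (Finset.mem_univ i)
      _ = 1 := hwsum
    have habs : |w t i - what i| ≤ 1 := by
      rw [abs_le]
      constructor <;> nlinarith [hwnn t ht i, hwpos i]
    have hexp : (1:ℝ) ≤ Real.exp κ * Real.exp (-κ * t) := by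
      rw [← Real.exp_add]
      apply Real.one_le_exp
      nlinarith
    calc |w t i - what i| ≤ 1 := habs
    _ ≤ Real.exp κ * Real.exp (-κ * t) := hexp
    _ ≤ (Real.exp (2*κ) / δ + Real.exp κ) * Real.exp (-κ * t) := by
        apply mul_le_mul_of_nonneg_right _ (Real.exp_pos _).le
        have : 0 < Real.exp (2*κ) / δ := by positivity
        linarith
end

section
/- Let $D$ and $Q_\alpha$ be real $k\times k$ matrices, $\hat w \in \mathbb{R}^k$ and $\bar f \in \mathbb{R}$ with $Q_\alpha \hat w = \bar f\, \hat w$ and $D\hat w = 0$. Let $\Omega \subseteq \mathbb{R}^m$ be open, $\lambda \in \mathbb{R}$, and $\psi : \mathbb{R}^m \to \mathbb{R}$ a twice continuously differentiable function satisfying $\Delta \psi(x) = -\lambda\, \psi(x)$ for all $x \in \Omega$. Then for any constant $c \in \mathbb{R}$ the vector function $v(x) = c\,\hat w\,(1 + \psi(x))$ satisfies, for every $i = 1,\ldots,k$ and every $x \in \Omega$, the steady-state equation $\sum_{j=1}^k d_{ij}\,\Delta v_j(x) + (Q_\alpha v(x))_i - \bar f\, v_i(x) = 0$. -/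
open Matrix

/-- The Laplace operator `Δ f (x) = ∑ i ∂²f/∂xᵢ² (x)` on functions of `m` real
variables: the sum of the second derivatives of the one-variable coordinate slices. -/
noncomputable def laplacian {m : ℕ} (f : (Fin m → ℝ) → ℝ) (x : Fin m → ℝ) : ℝ :=
  ∑ i, iteratedDeriv 2 (fun s => f (Function.update x i s)) (x i)

lemma iteratedDeriv_two_const_mul_one_add (a : ℝ) (g : ℝ → ℝ) (hg : ContDiff ℝ 2 g) (t : ℝ) :
    iteratedDeriv 2 (fun s => a * (1 + g s)) t = a * iteratedDeriv 2 g t := by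
  have hg2 : ContDiff ℝ ((1 : ℕ∞) + 1) g := by exact_mod_cast hg
  have h' := (contDiff_succ_iff_deriv.mp hg2)
  have hg1 : Differentiable ℝ g := h'.1
  have hdg : Differentiable ℝ (deriv g) := h'.2.2.differentiable (by simp)
  have h1 : deriv (fun s => a * (1 + g s)) = fun s => a * deriv g s := by
    funext s
    rw [deriv_const_mul _ (((hg1 s).const_add 1))]
    simp [deriv_const_add']
  simp only [show (2 : ℕ) = 1 + 1 from rfl, iteratedDeriv_succ, iteratedDeriv_zero]
  rw [h1, deriv_const_mul _ (hdg t)]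

lemma laplacian_const_mul_one_add {m : ℕ} (a : ℝ) (ψ : (Fin m → ℝ) → ℝ)
    (hψC : ContDiff ℝ 2 ψ) (x : Fin m → ℝ) :
    laplacian (fun y => a * (1 + ψ y)) x = a * laplacian ψ x := by
  unfold laplacian
  rw [Finset.mul_sum]
  refine Finset.sum_congr rfl fun i _ => ?_
  exact iteratedDeriv_two_const_mul_one_add a _ (hψC.comp (contDiff_update 2 x i)) (x i)

/-- If `Qα what = fbar • what`, `D what = 0`, and `Δψ = -λ ψ` on an open
set `Ω`, then for any constant `c` the vector function `v(x) = c • what • (1 + ψ(x))`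
satisfies the steady-state equation `D Δv + Qα v - fbar v = 0` of the distributed Eigen
system on `Ω`. -/
theorem steady_state_nonuniqueness_zero_eigenvalue
    (k m : ℕ) (D Qα : Matrix (Fin k) (Fin k) ℝ)
    (what : Fin k → ℝ) (fbar : ℝ)
    (heig : Qα.mulVec what = fbar • what)
    (hker : D.mulVec what = 0)
    (Ω : Set (Fin m → ℝ)) (hΩ : IsOpen Ω)
    (lam : ℝ) (ψ : (Fin m → ℝ) → ℝ)
    (hψC : ContDiff ℝ 2 ψ)
    (hψ : ∀ x ∈ Ω, laplacian ψ x = -lam * ψ x)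
    (c : ℝ) :
    ∀ x ∈ Ω, ∀ i : Fin k,
      (∑ j, D i j * laplacian (fun y => c * what j * (1 + ψ y)) x) +
        (Qα.mulVec (fun j => c * what j * (1 + ψ x))) i -
        fbar * (c * what i * (1 + ψ x)) = 0 := by
  intro x _ i
  have hL : ∀ j, laplacian (fun y => c * what j * (1 + ψ y)) x
      = c * what j * laplacian ψ x := fun j =>
    laplacian_const_mul_one_add (c * what j) ψ hψC x
  have h1 : (∑ j, D i j * laplacian (fun y => c * what j * (1 + ψ y)) x)
      = c * laplacian ψ x * (D.mulVec what) i := by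
    simp only [hL, Matrix.mulVec, dotProduct, Finset.mul_sum]
    exact Finset.sum_congr rfl fun j _ => by ring
  have h2 : (fun j => c * what j * (1 + ψ x)) = (c * (1 + ψ x)) • what := by
    funext j; simp [mul_comm, mul_assoc, mul_left_comm]
  rw [h1, hker, h2, Matrix.mulVec_smul, heig]
  simp only [Pi.zero_apply, Pi.smul_apply, smul_eq_mul]
  ring
end

section
/- Let $D$ and $Q_\alpha$ be real $k\times k$ matrices, $\hat w \in \mathbb{R}^k$ and $\bar f \in \mathbb{R}$ with $Q_\alpha \hat w = \bar f\,\hat w$ and $D\hat w = 0$. Let $\psi : \mathbb{R}^m \to \mathbb{R}$ be twice continuously differentiable with $\Delta\psi(x) = -\lambda\,\psi(x)$ for all $x$ in an open set $\Omega \subseteq \mathbb{R}^m$, and let $w : \mathbb{R} \to \mathbb{R}^k$ be a differentiable solution of $\dot w = Q_\alpha w - \bar f\, w$. Then the function $u(x,t) = w(t) + \hat w\,\psi(x)$ satisfies, for all $x \in \Omega$, $t \in \mathbb{R}$, and $i = 1,\ldots,k$, the distributed equation $\partial_t u_i(x,t) = (Q_\alpha u(x,t))_i - \bar f\, u_i(x,t)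 + \sum_{j=1}^k d_{ij}\,\Delta_x u_j(x,t)$. -/
open Matrix

lemma iteratedDeriv_two_const_add_mul (g : ℝ → ℝ) (hg : ContDiff ℝ 2 g) (c a x : ℝ) :
    iteratedDeriv 2 (fun s => c + a * g s) x = a * iteratedDeriv 2 g x := by
  have hd : deriv (fun s => c + a * g s) = fun s => a * deriv g s := by
    funext s
    rw [deriv_const_add]
    exact deriv_const_mul a (hg.differentiable (by norm_num) s)
  have hdiff : ∀ y, DifferentiableAt ℝ (deriv g) y := by
    intro y
    have := hg.differentiable_iteratedDeriv 1 (by norm_num)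
    simpa [iteratedDeriv_one] using this y
  rw [show (2 : ℕ) = 1 + 1 from rfl, iteratedDeriv_succ, iteratedDeriv_one,
    iteratedDeriv_succ, iteratedDeriv_one, hd]
  exact deriv_const_mul a (hdiff x)

lemma laplacian_const_add_mul {m : ℕ} (ψ : (Fin m → ℝ) → ℝ) (hψC : ContDiff ℝ 2 ψ)
    (c a : ℝ) (x : Fin m → ℝ) :
    laplacian (fun y => c + a * ψ y) x = a * laplacian ψ x := by
  unfold laplacian
  rw [Finset.mul_sum]
  refine Finset.sum_congr rfl fun i _ => ?_
  exact iteratedDeriv_two_const_add_mul (fun s => ψ (Function.update x i s))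
    (hψC.comp (contDiff_update 2 x i)) c a (x i)

/-- If `Qα what = fbar • what`, `D what = 0`, `Δψ = -λψ` on an open set
`Ω`, and `w` solves `ẇ = Qα w - fbar w`, then `u(x,t) = w(t) + what ψ(x)` solves the
distributed equation `∂ₜ u = Qα u - fbar u + D Δₓ u` on `Ω`. -/
theorem distributed_solutions_zero_eigenvalue
    (k m : ℕ) (D Qα : Matrix (Fin k) (Fin k) ℝ)
    (what : Fin k → ℝ) (fbar : ℝ)
    (heig : Qα.mulVec what = fbar • what)
    (hker : D.mulVec what = 0)
    (Ω : Set (Fin m → ℝ)) (hΩ : IsOpen Ω)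
    (lam : ℝ) (ψ : (Fin m → ℝ) → ℝ)
    (hψC : ContDiff ℝ 2 ψ)
    (hψ : ∀ x ∈ Ω, laplacian ψ x = -lam * ψ x)
    (w : ℝ → Fin k → ℝ)
    (hw : ∀ (t : ℝ) (i : Fin k),
      HasDerivAt (fun s => w s i) ((Qα.mulVec (w t)) i - fbar * w t i) t) :
    ∀ x ∈ Ω, ∀ (t : ℝ) (i : Fin k),
      HasDerivAt (fun s => w s i + what i * ψ x)
        ((Qα.mulVec (fun j => w t j + what j * ψ x)) i -
          fbar * (w t i + what i * ψ x) +
          ∑ j, D i j * laplacian (fun y => w t j + what j * ψ y) x) t := by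
  intro x hx t i
  have h1 : (fun j => w t j + what j * ψ x) = w t + ψ x • what := by
    funext j; simp [mul_comm]
  have h2 : (Qα.mulVec (fun j => w t j + what j * ψ x)) i
      = (Qα.mulVec (w t)) i + ψ x * (fbar * what i) := by
    rw [h1, Matrix.mulVec_add, Matrix.mulVec_smul, heig]
    simp [mul_assoc]
  have h3 : ∀ j, laplacian (fun y => w t j + what j * ψ y) x
      = what j * laplacian ψ x := fun j =>
    laplacian_const_add_mul ψ hψC (w t j) (what j) x
  have h4 : ∑ j, D i j * laplacian (fun y => w t j + what j * ψ y) x = 0 := by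
    have : ∑ j, D i j * (what j * laplacian ψ x)
        = (D.mulVec what) i * laplacian ψ x := by
      rw [Matrix.mulVec, dotProduct, Finset.sum_mul]
      exact Finset.sum_congr rfl fun j _ => by ring
    simp only [h3, this, hker]
    simp
  rw [h2, h4]
  have := (hw t i).add_const (what i * ψ x)
  exact this.congr_deriv (by ring)
end

section
/- Let $Q_\alpha$ and $D$ be real $k\times k$ matrices, and let $\lambda_1,\ldots,\lambda_N \in \mathbb{R}$ and $\psi_1,\ldots,\psi_N : \mathbb{R}^m \to \mathbb{R}$ be twice continuously differentiable with $\Delta\psi_j = -\lambda_j\psi_j$ on an open set $\Omega \subseteq \mathbb{R}^m$. Let $\alpha \in \mathbb{R}^k$, let $c^0 : \mathbb{R} \to \mathbb{R}^k$ be a differentiable solution of $\dot c^0 = Q_\alpha c^0 - f(t)\,c^0$ with $f(t) = (\alpha, c^0(t))$, and for each $j = 1,\ldots,N$ let $c^j : \mathbb{R} \to \mathbb{R}^k$ be a differentiable solution of $\dot c^j = Q_\alpha c^j - f(t)\,c^j - \lambda_j D c^j$. Then the function $u(x,t) = c^0(t) + \sum_{j=1}^N c^j(t)\,\psi_j(x)$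 satisfies, for all $x \in \Omega$ and $t$, the distributed Eigen equation $\partial_t u_i(x,t) = (Q_\alpha u(x,t))_i - u_i(x,t)\,f(t) + \sum_{l=1}^k d_{il}\,\Delta_x u_l(x,t)$, $i = 1,\ldots,k$. If moreover $\Omega$ has Lebesgue measure $1$ and $\int_\Omega \psi_j(x)\,dx = 0$ for each $j$, then $f(t) = \int_\Omega (\alpha, u(x,t))\,dx$, i.e., $f$ equals the mean integral fitness of $u$. -/
open Matrix MeasureTheory

lemma iter2_lin {N : ℕ} (g : Fin N → ℝ → ℝ) (hg : ∀ j, ContDiff ℝ 2 (g j))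
    (a : ℝ) (b : Fin N → ℝ) (y : ℝ) :
    iteratedDeriv 2 (fun s => a + ∑ j, b j * g j s) y
      = ∑ j, b j * iteratedDeriv 2 (g j) y := by
  have hD1 : ∀ j, Differentiable ℝ (g j) := fun j => (hg j).differentiable (by norm_num)
  have hg' : ∀ j, ContDiff ℝ (1 + 1) (g j) := fun j => by
    have := hg j; norm_num at this ⊢; exact this
  have hD2 : ∀ j, Differentiable ℝ (deriv (g j)) := fun j =>
    ((contDiff_succ_iff_deriv.mp (hg' j)).2.2).differentiable (by norm_num)
  have hd : deriv (fun s => a + ∑ j, b j * g j s) = fun s => ∑ j, b j * deriv (g j) s := by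
    funext s
    have : HasDerivAt (fun s => a + ∑ j, b j * g j s) (0 + ∑ j, b j * deriv (g j) s) s :=
      (hasDerivAt_const s a).add (HasDerivAt.fun_sum fun j _ =>
        ((hD1 j s).hasDerivAt.const_mul (b j)))
    rw [this.deriv, zero_add]
  have h2 : ∀ (h : ℝ → ℝ), iteratedDeriv 2 h = deriv (deriv h) := fun h => by
    rw [show (2:ℕ) = 1 + 1 from rfl, iteratedDeriv_succ, iteratedDeriv_one]
  rw [h2, hd]
  have : HasDerivAt (fun s => ∑ j, b j * deriv (g j) s)
      (∑ j, b j * deriv (deriv (g j)) y) y :=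
    HasDerivAt.fun_sum fun j _ => ((hD2 j y).hasDerivAt.const_mul (b j))
  rw [this.deriv]
  exact Finset.sum_congr rfl fun j _ => by rw [h2]

lemma lap_lin {m N : ℕ} (ψ : Fin N → (Fin m → ℝ) → ℝ) (hψC : ∀ j, ContDiff ℝ 2 (ψ j))
    (a : ℝ) (b : Fin N → ℝ) (x : Fin m → ℝ) :
    laplacian (fun y => a + ∑ j, b j * ψ j y) x = ∑ j, b j * laplacian (ψ j) x := by
  unfold laplacian
  simp_rw [Finset.mul_sum]
  rw [Finset.sum_comm]
  refine Finset.sum_congr rfl fun i _ => ?_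
  exact iter2_lin (fun j s => ψ j (Function.update x i s))
    (fun j => (hψC j).comp (contDiff_update 2 x i)) a b (x i)

/-- If `c⁰` solves the local Eigen mode equation
`ċ⁰ = Qα c⁰ - f(t) c⁰`, `f(t) = (α, c⁰(t))`, and each `cʲ` solves the mode equation
`ċʲ = Qα cʲ - f(t) cʲ - λⱼ D cʲ`, with `Δψⱼ = -λⱼ ψⱼ` on an open set `Ω`, then
`u(x,t) = c⁰(t) + ∑ⱼ cʲ(t) ψⱼ(x)` solves the distributed Eigen equation
`∂ₜ u = Qα u - u f(t) + D Δₓ u` on `Ω`; and if moreover `Ω` has Lebesgue measure `1`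
and each `ψⱼ` integrates to `0` over `Ω`, then `f` equals the mean integral fitness
`∫_Ω (α, u(x,t)) dx`. -/
theorem mode_expansion_solves_distributed_eigen
    (k m N : ℕ) (Qα D : Matrix (Fin k) (Fin k) ℝ)
    (Ω : Set (Fin m → ℝ)) (hΩopen : IsOpen Ω) (hΩmeas : MeasurableSet Ω)
    (lam : Fin N → ℝ) (ψ : Fin N → (Fin m → ℝ) → ℝ)
    (hψC : ∀ j, ContDiff ℝ 2 (ψ j))
    (hψ : ∀ j, ∀ x ∈ Ω, laplacian (ψ j) x = -lam j * ψ j x)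
    (α : Fin k → ℝ) (c0 : ℝ → Fin k → ℝ) (c : Fin N → ℝ → Fin k → ℝ)
    (f : ℝ → ℝ) (hf : ∀ t : ℝ, f t = ∑ i, α i * c0 t i)
    (hc0 : ∀ (t : ℝ) (i : Fin k),
      HasDerivAt (fun s => c0 s i) ((Qα.mulVec (c0 t)) i - f t * c0 t i) t)
    (hc : ∀ (j : Fin N) (t : ℝ) (i : Fin k),
      HasDerivAt (fun s => c j s i)
        ((Qα.mulVec (c j t)) i - f t * c j t i - lam j * (D.mulVec (c j t)) i) t) :
    (∀ x ∈ Ω, ∀ (t : ℝ) (i : Fin k),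
      HasDerivAt (fun s => c0 s i + ∑ j, c j s i * ψ j x)
        ((Qα.mulVec (fun l => c0 t l + ∑ j, c j t l * ψ j x)) i -
          (c0 t i + ∑ j, c j t i * ψ j x) * f t +
          ∑ l, D i l * laplacian (fun y => c0 t l + ∑ j, c j t l * ψ j y) x) t) ∧
    ((volume Ω = 1 ∧ ∀ j, IntegrableOn (ψ j) Ω ∧ (∫ x in Ω, ψ j x) = 0) →
      ∀ t : ℝ, f t = ∫ x in Ω, ∑ i, α i * (c0 t i + ∑ j, c j t i * ψ j x)) := by
  constructor
  · intro x hx t i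
    have key := (hc0 t i).fun_add (HasDerivAt.fun_sum (u := Finset.univ)
      fun j _ => (hc j t i).mul_const (ψ j x))
    refine key.congr_deriv (Eq.symm ?_)
    have hlap : ∀ l, laplacian (fun y => c0 t l + ∑ j, c j t l * ψ j y) x
        = ∑ j, c j t l * (-lam j * ψ j x) := by
      intro l
      rw [lap_lin ψ hψC (c0 t l) (fun j => c j t l) x]
      exact Finset.sum_congr rfl fun j _ => by rw [hψ j x hx]
    simp only [hlap, Matrix.mulVec, dotProduct]
    simp only [mul_add, add_mul, sub_mul, Finset.sum_add_distrib, Finset.sum_sub_distrib,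
      Finset.mul_sum, Finset.sum_mul]
    have s1 : (∑ l, ∑ j, Qα i l * (c j t l * ψ j x))
        = ∑ j, ∑ l, Qα i l * c j t l * ψ j x := by
      rw [Finset.sum_comm]
      exact Finset.sum_congr rfl fun j _ => Finset.sum_congr rfl fun l _ => by ring
    have s2 : (∑ l, ∑ j, D i l * (c j t l * (-lam j * ψ j x)))
        = -∑ j, ∑ l, lam j * (D i l * c j t l) * ψ j x := by
      rw [Finset.sum_comm, ← Finset.sum_neg_distrib]
      refine Finset.sum_congr rfl fun j _ => ?_
      rw [← Finset.sum_neg_distrib]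
      exact Finset.sum_congr rfl fun l _ => by ring
    have s3 : (∑ j, c j t i * ψ j x * f t) = ∑ j, f t * c j t i * ψ j x :=
      Finset.sum_congr rfl fun j _ => by ring
    rw [s1, s2, s3]
    ring
  · rintro ⟨hvol, hint⟩ t
    have hptw : ∀ x, ∑ i, α i * (c0 t i + ∑ j, c j t i * ψ j x)
        = f t + ∑ j, (∑ i, α i * c j t i) * ψ j x := by
      intro x
      rw [hf]
      simp only [mul_add, Finset.sum_add_distrib, Finset.mul_sum, Finset.sum_mul]
      congr 1
      rw [Finset.sum_comm]
      exact Finset.sum_congr rfl fun j _ => Finset.sum_congr rfl fun i _ => by ring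
    simp_rw [hptw]
    have hfm : IsFiniteMeasure (volume.restrict Ω) := by
      constructor
      rw [Measure.restrict_apply_univ, hvol]
      exact ENNReal.one_lt_top
    have hintsum : Integrable (fun x => ∑ j, (∑ i, α i * c j t i) * ψ j x)
        (volume.restrict Ω) :=
      integrable_finset_sum _ fun j _ => ((hint j).1.const_mul _)
    rw [integral_add (integrable_const _) hintsum, integral_finset_sum _
      (fun j _ => ((hint j).1.const_mul _)), integral_const]
    simp only [measureReal_def, Measure.restrict_apply_univ, hvol]
    simp_rw [integral_const_mul]
    rw [Finset.sum_eq_zero fun j _ => by rw [(hint j).2, mul_zero]]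
    simp
end
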